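/- Let G be a simple graph on [n] and i ∈ [n]. Then the initial ideal of the binomial edge ideal of the restriction G \ {i} together with x_i, y_i equals (in(J_{G\{i\}}), x_i, y_i) = (in(J_G), x_i, y_i); in particular, every minimal monomial generator of in(J_G) not divisible by x_i or y_i lies in in(J_{G\{i\}}). -/

import Mathlib

open MvPolynomial SimpleGraph Classical
open scoped BigOperators

noncomputable section BinomialEdgeIdeals

variable (K : Type*) [Field K]

/-- `f i j = x_i y_j - x_j y_i` in `S = K[x_v, y_v : v ∈ V]`, where
`x_v = X (Sum.inl v)` and `y_v = X (Sum.inr v)`. -/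
def fij {V : Type*} (i j : V) : MvPolynomial (V ⊕ V) K :=
  X (Sum.inl i) * X (Sum.inr j) - X (Sum.inl j) * X (Sum.inr i)

/-- The binomial edge ideal of a simple graph `G` on a linearly ordered vertex set. -/
def beIdeal {V : Type*} [LinearOrder V] (G : SimpleGraph V) :
    Ideal (MvPolynomial (V ⊕ V) K) :=
  Ideal.span { f | ∃ i j : V, i < j ∧ G.Adj i j ∧ f = fij K i j }

/-- Exponent vectors, compared lexicographically with
`x_1 > x_2 > ⋯ > x_n > y_1 > ⋯ > y_n`: the variable `x_i` is encoded as
`i - 1 ∈ Fin (n+n)` and `y_i` as `n + i - 1`, and a *smaller* code means a *bigger*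
variable, so the `Finsupp.Lex` order (which compares at the smallest differing index)
is exactly the lexicographic monomial order induced by this order of the variables. -/
def expLex {n : ℕ} (m : (Fin n ⊕ Fin n) →₀ ℕ) : Lex (Fin (n + n) →₀ ℕ) :=
  toLex (Finsupp.equivMapDomain finSumFinEquiv m)

/-- The leading exponent (largest exponent vector in the support, in the lexicographic
order `x_1 > ⋯ > x_n > y_1 > ⋯ > y_n`) of a polynomial; junk value `0` for `p = 0`. -/
def leadExp {n : ℕ} (p : MvPolynomial (Fin n ⊕ Fin n) K) : (Fin n ⊕ Fin n) →₀ ℕ :=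
  Finsupp.equivMapDomain finSumFinEquiv.symm
    (ofLex (WithBot.unbotD (toLex 0) (p.support.image (fun m => expLex m)).max))

/-- The initial ideal of `I` with respect to the lexicographic order induced by
`x_1 > ⋯ > x_n > y_1 > ⋯ > y_n`. -/
def initialIdeal {n : ℕ} (I : Ideal (MvPolynomial (Fin n ⊕ Fin n) K)) :
    Ideal (MvPolynomial (Fin n ⊕ Fin n) K) :=
  Ideal.span { q | ∃ p ∈ I, p ≠ 0 ∧ q = monomial (leadExp K p) (1 : K) }

/-- The graded maximal ideal, generated by all the variables. -/
def varIdeal (V : Type*) : Ideal (MvPolynomial (V ⊕ V) K) :=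
  Ideal.span (Set.range X)

/-- `depth (S/I)`: the supremum of the lengths of regular sequences on `S/I`
consisting of elements of the graded maximal ideal. -/
def quotDepth {V : Type*} (I : Ideal (MvPolynomial (V ⊕ V) K)) : ℕ :=
  sSup { k | ∃ rs : List (MvPolynomial (V ⊕ V) K), rs.length = k ∧
    (∀ r ∈ rs, r ∈ varIdeal K V) ∧
    RingTheory.Sequence.IsRegular (MvPolynomial (V ⊕ V) K ⧸ I) rs }

/-- `p` is homogeneous of degree `d ∈ ℤ` (the zero polynomial having every degree). -/
def IsHomogInt {σ : Type*} (p : MvPolynomial σ K) (d : ℤ) : Prop :=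
  p = 0 ∨ ∃ m : ℕ, (m : ℤ) = d ∧ p.IsHomogeneous m

/-- A graded free resolution of `S/I`: free modules `F i = ⊕_j S(-j)^{b i j}`
(with basis indexed by `Σ j : ℤ, Fin (b i j)`), degree-zero (i.e. twist-compatible
homogeneous) differentials, exact, augmented by a degree-zero surjection onto `S ⧸ I`. -/
structure GradedFreeResolution {σ : Type*} (I : Ideal (MvPolynomial σ K)) where
  b : ℕ → ℤ →₀ ℕ
  diff : ∀ i : ℕ, ((Σ j : ℤ, Fin (b (i + 1) j)) →₀ MvPolynomial σ K) →ₗ[MvPolynomial σ K]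
      ((Σ j : ℤ, Fin (b i j)) →₀ MvPolynomial σ K)
  aug : ((Σ j : ℤ, Fin (b 0 j)) →₀ MvPolynomial σ K) →ₗ[MvPolynomial σ K]
      (MvPolynomial σ K ⧸ I)
  homog : ∀ (i : ℕ) (j : ℤ) (k : Fin (b (i + 1) j)) (j' : ℤ) (k' : Fin (b i j')),
    IsHomogInt K ((diff i (Finsupp.single ⟨j, k⟩ 1)) ⟨j', k'⟩) (j - j')
  aug_homog : ∀ (j : ℤ) (k : Fin (b 0 j)), ∃ p : MvPolynomial σ K,
    IsHomogInt K p j ∧ aug (Finsupp.single ⟨j, k⟩ 1) = Ideal.Quotient.mk I p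
  aug_surj : Function.Surjective aug
  exact_zero : Function.Exact (diff 0) aug
  exact_succ : ∀ i : ℕ, Function.Exact (diff (i + 1)) (diff i)

/-- The Castelnuovo–Mumford regularity of `S/I`: the least `r` such that `S/I` admits a
graded free resolution with all `i`-th syzygies generated in degrees `≤ i + r` (the
minimal graded free resolution realizes this minimum). -/
def regQuot {σ : Type*} (I : Ideal (MvPolynomial σ K)) : ℤ :=
  sInf { r : ℤ | ∃ F : GradedFreeResolution K I, ∀ i j, F.b i j ≠ 0 → j ≤ i + r }

/- ### Graph-theoretic notions -/

/-- `s` is a maximal clique of `G`. -/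
def IsMaxClique {V : Type*} (G : SimpleGraph V) (s : Finset V) : Prop :=
  G.IsClique ↑s ∧ ∀ t : Finset V, G.IsClique ↑t → s ⊆ t → s = t

/-- A graph is chordal if it has no induced cycle of length `≥ 4`. -/
def Chordal {V : Type*} (G : SimpleGraph V) : Prop :=
  ∀ m : ℕ, 4 ≤ m → IsEmpty (cycleGraph m ↪g G)

/-- A block graph: a chordal graph in which any two distinct maximal cliques meet in at
most one vertex. -/
def IsBlockGraph {V : Type*} (G : SimpleGraph V) : Prop :=
  Chordal G ∧ ∀ s t : Finset V, IsMaxClique G s → IsMaxClique G t → s ≠ t →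
    (s ∩ t).card ≤ 1

/-- The conditions (i) and (ii) defining a `C_ℓ`-graph, for a given sequence of cliques
`F 0, …, F (ℓ-1)`: each `F i` is a maximal clique with at least `2` vertices, consecutive
cliques meet in exactly one vertex, non-consecutive cliques are disjoint, and every edge
of `G` either lies in some `F i` or is a pendant edge `{j, k}` attached at an
intersection point `j` of two consecutive cliques, with `k` of degree `1`. -/
def IsCliqueSeq {V : Type*} (G : SimpleGraph V) (ℓ : ℕ) (F : Fin ℓ → Finset V) : Prop :=
  (∀ i, IsMaxClique G (F i) ∧ 2 ≤ (F i).card) ∧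
  (∀ i : Fin ℓ, ∀ h : i.val + 1 < ℓ, (F i ∩ F ⟨i.val + 1, h⟩).card = 1) ∧
  (∀ i j : Fin ℓ, i < j → j.val ≠ i.val + 1 → F i ∩ F j = ∅) ∧
  (∀ e ∈ G.edgeSet, (∃ i, ∀ v ∈ e, v ∈ F i) ∨
    (∃ (jv kv : V) (i : Fin ℓ) (h : i.val + 1 < ℓ), e = s(jv, kv) ∧
      jv ∈ F i ∩ F ⟨i.val + 1, h⟩ ∧ (G.neighborSet kv).ncard = 1))

/-- A `C_ℓ`-graph. -/
def IsCLGraph {V : Type*} (G : SimpleGraph V) (ℓ : ℕ) : Prop :=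
  G.Connected ∧ ∃ F : Fin ℓ → Finset V, IsCliqueSeq G ℓ F

/-- `G` has an induced path of length `k` (an induced subgraph isomorphic to the path
graph with `k` edges). -/
def HasInducedPathLen {V : Type*} (G : SimpleGraph V) (k : ℕ) : Prop :=
  Nonempty (pathGraph (k + 1) ↪g G)

/-- The longest induced path of `G` has length `ℓ`. -/
def LongestInducedPathLen {V : Type*} (G : SimpleGraph V) (ℓ : ℕ) : Prop :=
  HasInducedPathLen G ℓ ∧ ∀ k, HasInducedPathLen G k → k ≤ ℓ

/-- The longest path of `G` has length `ℓ`. -/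
def LongestPathLen {V : Type*} (G : SimpleGraph V) (ℓ : ℕ) : Prop :=
  (∃ (u v : V) (p : G.Walk u v), p.IsPath ∧ p.length = ℓ) ∧
  ∀ (u v : V) (p : G.Walk u v), p.IsPath → p.length ≤ ℓ

/-- A caterpillar tree: a tree containing a path `P` such that every vertex is a vertex
of `P` or adjacent to a vertex of `P`. -/
def IsCaterpillar {V : Type*} (T : SimpleGraph V) : Prop :=
  T.IsTree ∧ ∃ (u v : V) (p : T.Walk u v), p.IsPath ∧
    ∀ w : V, w ∈ p.support ∨ ∃ z ∈ p.support, T.Adj w z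

/-- The spider tree on `ℓ + 3` vertices: a path `0 — 1 — ⋯ — ℓ` together with a path
`k — (ℓ+1) — (ℓ+2)` of length 2 attached at the vertex `k`. -/
def spider (ℓ k : ℕ) : SimpleGraph (Fin (ℓ + 3)) :=
  SimpleGraph.fromRel (fun a b =>
    (a.val + 1 = b.val ∧ b.val ≤ ℓ) ∨ (a.val = k ∧ b.val = ℓ + 1) ∨
    (a.val = ℓ + 1 ∧ b.val = ℓ + 2))

/-- The graph obtained from `G` by deleting the vertices in `T` (keeping the ambient
vertex set: the vertices of `T` simply become isolated). -/
def delVerts {V : Type*} (G : SimpleGraph V) (T : Set V) : SimpleGraph V where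
  Adj a b := G.Adj a b ∧ a ∉ T ∧ b ∉ T
  symm := ⟨fun a b h => ⟨h.1.symm, h.2.2, h.2.1⟩⟩
  loopless := ⟨fun a h => G.loopless.irrefl a h.1⟩

/-- The prime ideal `P_T(G)`: generated by `x_i, y_i` for `i ∈ T`, together with the
binomial edge ideals of the complete graphs on the connected components of the
restriction of `G` to the complement of `T`. -/
def cutPrime {V : Type*} [LinearOrder V] (G : SimpleGraph V) (T : Set V) :
    Ideal (MvPolynomial (V ⊕ V) K) :=
  Ideal.span ({ q | ∃ i ∈ T, q = X (Sum.inl i) ∨ q = X (Sum.inr i) } ∪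
    { q | ∃ i j : V, i < j ∧ i ∉ T ∧ j ∉ T ∧ (delVerts G T).Reachable i j ∧
      q = fij K i j })

/-- `c(T)`: the number of connected components of the restriction of `G` to the
complement of `T`. -/
def numComp {V : Type*} (G : SimpleGraph V) (T : Set V) : ℕ :=
  Nat.card ((G.induce Tᶜ).ConnectedComponent)

/-- `F 0, …, F (r-1)` is a leaf order on the maximal cliques of `G`: it enumerates them
without repetition, and each `F k` with `k > 0` is a leaf of the simplicial complex
generated by `F 0, …, F k`, i.e. admits a branch `F b`, `b < k`. -/
def IsLeafOrder {V : Type*} (G : SimpleGraph V) (r : ℕ) (F : Fin r → Finset V) : Prop :=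
  Function.Injective F ∧ (Set.range F = { s | IsMaxClique G s }) ∧
  ∀ k : Fin r, 0 < k.val → ∃ b : Fin r, b < k ∧
    ∀ m : Fin r, m < k → F m ∩ F k ⊆ F b ∩ F k

/-- An admissible path from `i` to `j` (`i < j`) in `G`: a path (recorded as its list of
vertices) with pairwise distinct vertices, whose interior vertices `v` all satisfy
`v < i` or `v > j`, and which is minimal: no proper subsequence with the same endpoints
is again a path of `G`. -/
def IsAdmissiblePath {n : ℕ} (G : SimpleGraph (Fin n)) (i j : Fin n)
    (π : List (Fin n)) : Prop :=
  i < j ∧ π.Chain' G.Adj ∧ π.head? = some i ∧ π.getLast? = some j ∧ π.Nodup ∧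
  (∀ v ∈ π, v ≠ i → v ≠ j → (v < i ∨ j < v)) ∧
  ∀ π' : List (Fin n), π' ≠ π → π'.Sublist π → π'.head? = some i →
    π'.getLast? = some j → ¬ π'.Chain' G.Adj

/-- `u_π = (∏_{v ∈ π, v > j} x_v) (∏_{v ∈ π, v < i} y_v)` for a path `π` from `i` to `j`. -/
def uPath {n : ℕ} (i j : Fin n) (π : List (Fin n)) : MvPolynomial (Fin n ⊕ Fin n) K :=
  ((π.filter (fun v => j < v)).map (fun v => X (Sum.inl v))).prod *
  ((π.filter (fun v => v < i)).map (fun v => X (Sum.inr v))).prod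

/-- `Γ` is the reduced Gröbner basis of `I` with respect to the lexicographic order
`x_1 > ⋯ > x_n > y_1 > ⋯ > y_n`: `Γ ⊆ I`, all elements are monic, the leading monomials
of `Γ` generate the initial ideal of `I`, and no monomial of an element of `Γ` is
divisible by the leading monomial of another element. -/
def IsReducedGB {n : ℕ} (Γ : Set (MvPolynomial (Fin n ⊕ Fin n) K))
    (I : Ideal (MvPolynomial (Fin n ⊕ Fin n) K)) : Prop :=
  Γ ⊆ (I : Set (MvPolynomial (Fin n ⊕ Fin n) K)) ∧
  (∀ g ∈ Γ, g ≠ 0 ∧ MvPolynomial.coeff (leadExp K g) g = 1) ∧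
  initialIdeal K I = Ideal.span ((fun g => (monomial (leadExp K g) (1 : K))) '' Γ) ∧
  ∀ g ∈ Γ, ∀ g' ∈ Γ, g' ≠ g → ∀ m ∈ g.support, ¬ leadExp K g' ≤ m

end BinomialEdgeIdeals

noncomputable section AuxStmt1

open MvPolynomial

lemma equiv_expLex {n : ℕ} (m : (Fin n ⊕ Fin n) →₀ ℕ) :
    Finsupp.equivMapDomain finSumFinEquiv.symm (ofLex (expLex m)) = m := by
  ext a; simp [expLex]

lemma expLex_equiv {n : ℕ} (x : Lex (Fin (n + n) →₀ ℕ)) :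
    expLex (Finsupp.equivMapDomain finSumFinEquiv.symm (ofLex x)) = x := by
  conv_rhs => rw [← toLex_ofLex x]
  show toLex _ = toLex (ofLex x)
  congr 1
  ext a; simp

lemma expLex_inj {n : ℕ} : Function.Injective (expLex (n := n)) := by
  intro a b h
  rw [← equiv_expLex a, h, equiv_expLex]

lemma leadExp_spec {K : Type*} [Field K] {n : ℕ} {p : MvPolynomial (Fin n ⊕ Fin n) K}
    (hp : p ≠ 0) :
    leadExp K p ∈ p.support ∧ ∀ m ∈ p.support, expLex m ≤ expLex (leadExp K p) := by
  have hne : (p.support.image expLex).Nonempty := by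
    refine Finset.Nonempty.image ?_ _
    rw [Finset.nonempty_iff_ne_empty]
    simpa [MvPolynomial.support_eq_empty] using hp
  obtain ⟨M, hM⟩ := Finset.max_of_nonempty hne
  have hMmem := Finset.mem_of_max hM
  obtain ⟨m0, hm0, hme⟩ := Finset.mem_image.mp hMmem
  have hlead : leadExp K p = m0 := by
    rw [leadExp, hM, WithBot.unbotD_coe, ← hme, equiv_expLex]
  have hl : expLex (leadExp K p) = M := by rw [hlead, hme]
  refine ⟨hlead ▸ hm0, fun m hm => ?_⟩
  have := Finset.le_max (Finset.mem_image_of_mem expLex hm)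
  rw [hM, hl] at *
  exact_mod_cast this

lemma leadExp_eq_of {K : Type*} [Field K] {n : ℕ}
    {p q : MvPolynomial (Fin n ⊕ Fin n) K} (hsub : q.support ⊆ p.support)
    (hmem : leadExp K p ∈ q.support) : leadExp K q = leadExp K p := by
  have hq : q ≠ 0 := by
    intro h; rw [h] at hmem; simp at hmem
  have hp : p ≠ 0 := by
    intro h
    rw [h] at hsub
    have := hsub hmem
    simp at this
  obtain ⟨h1, h2⟩ := leadExp_spec (K := K) hq
  obtain ⟨h1', h2'⟩ := leadExp_spec (K := K) hp
  exact expLex_inj (le_antisymm (h2' _ (hsub h1)) (h2 _ hmem))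

lemma leadExp_X {K : Type*} [Field K] {n : ℕ} (v : Fin n ⊕ Fin n) :
    leadExp K (X v : MvPolynomial (Fin n ⊕ Fin n) K) = Finsupp.single v 1 := by
  have h := (leadExp_spec (K := K) (p := (X v : MvPolynomial (Fin n ⊕ Fin n) K))
    (X_ne_zero v)).1
  rwa [MvPolynomial.support_X, Finset.mem_singleton] at h

/-- The substitution `x_i ↦ 0, y_i ↦ 0`. -/
def phi (K : Type*) [Field K] {n : ℕ} (i : Fin n) :
    MvPolynomial (Fin n ⊕ Fin n) K →ₐ[K] MvPolynomial (Fin n ⊕ Fin n) K :=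
  aeval (fun v => if v = Sum.inl i ∨ v = Sum.inr i then 0 else X v)

lemma phi_monomial {K : Type*} [Field K] {n : ℕ} (i : Fin n)
    (m : (Fin n ⊕ Fin n) →₀ ℕ) (c : K) :
    phi K i (monomial m c) =
      if m (Sum.inl i) = 0 ∧ m (Sum.inr i) = 0 then monomial m c else 0 := by
  rw [phi, aeval_monomial]
  split_ifs with h
  · rw [monomial_eq]
    rw [show (algebraMap K (MvPolynomial (Fin n ⊕ Fin n) K)) c = C c from rfl]
    congr 1
    refine Finsupp.prod_congr fun v hv => ?_
    have hv1 : v ≠ Sum.inl i := by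
      rintro rfl; exact (Finsupp.mem_support_iff.mp hv) h.1
    have hv2 : v ≠ Sum.inr i := by
      rintro rfl; exact (Finsupp.mem_support_iff.mp hv) h.2
    rw [if_neg (by tauto)]
  · rcases not_and_or.mp h with h | h
    · have hmem : Sum.inl i ∈ m.support := Finsupp.mem_support_iff.mpr h
      rw [Finsupp.prod, Finset.prod_eq_zero hmem (by simp [zero_pow h]), mul_zero]
    · have hmem : Sum.inr i ∈ m.support := Finsupp.mem_support_iff.mpr h
      rw [Finsupp.prod, Finset.prod_eq_zero hmem (by simp [zero_pow h]), mul_zero]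

lemma coeff_phi {K : Type*} [Field K] {n : ℕ} (i : Fin n)
    (p : MvPolynomial (Fin n ⊕ Fin n) K) (m : (Fin n ⊕ Fin n) →₀ ℕ) :
    coeff m (phi K i p) =
      if m (Sum.inl i) = 0 ∧ m (Sum.inr i) = 0 then coeff m p else 0 := by
  conv_lhs => rw [p.as_sum, map_sum]
  rw [MvPolynomial.coeff_sum]
  by_cases h : m (Sum.inl i) = 0 ∧ m (Sum.inr i) = 0
  · rw [if_pos h]
    by_cases hm : m ∈ p.support
    · rw [Finset.sum_eq_single_of_mem m hm]
      · rw [phi_monomial, if_pos h, coeff_monomial, if_pos rfl]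
      · intro b _ hb
        rw [phi_monomial]
        split_ifs
        · rw [coeff_monomial, if_neg hb]
        · exact coeff_zero _
    · rw [Finset.sum_eq_zero, eq_comm]
      · exact MvPolynomial.notMem_support_iff.mp hm
      · intro b hb
        have hb' : b ≠ m := fun e => hm (e ▸ hb)
        rw [phi_monomial]
        split_ifs
        · rw [coeff_monomial, if_neg hb']
        · exact coeff_zero _
  · rw [if_neg h, Finset.sum_eq_zero]
    intro b hb
    rw [phi_monomial]
    split_ifs with hb2
    · rw [coeff_monomial]
      split_ifs with e
      · exact absurd (e ▸ hb2) h
      · rfl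
    · exact coeff_zero _

lemma phi_mem_of {K : Type*} [Field K] {n : ℕ} (i : Fin n)
    (s : Set (MvPolynomial (Fin n ⊕ Fin n) K))
    (hs : ∀ g ∈ s, phi K i g ∈ Ideal.span s)
    {p : MvPolynomial (Fin n ⊕ Fin n) K} (hp : p ∈ Ideal.span s) :
    phi K i p ∈ Ideal.span s := by
  have hmap := Ideal.mem_map_of_mem (phi K i).toRingHom hp
  rw [Ideal.map_span] at hmap
  refine Ideal.span_le.mpr ?_ hmap
  rintro q ⟨g, hg, rfl⟩
  exact hs g hg

lemma monomial_mem_pair {K : Type*} [Field K] {n : ℕ} (i : Fin n)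
    (m : (Fin n ⊕ Fin n) →₀ ℕ)
    (h : ¬(m (Sum.inl i) = 0 ∧ m (Sum.inr i) = 0)) :
    (monomial m (1 : K)) ∈
      Ideal.span {(X (Sum.inl i) : MvPolynomial (Fin n ⊕ Fin n) K), X (Sum.inr i)} := by
  rcases not_and_or.mp h with h | h
  · have hle : Finsupp.single (Sum.inl i) 1 ≤ m := by
      rw [Finsupp.single_le_iff]; omega
    have heq : monomial m (1 : K) =
        monomial (m - Finsupp.single (Sum.inl i) 1) 1 * X (Sum.inl i) := by
      rw [MvPolynomial.X, monomial_mul, mul_one, tsub_add_cancel_of_le hle]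
    rw [heq]
    exact Ideal.mul_mem_left _ _ (Ideal.subset_span (by simp))
  · have hle : Finsupp.single (Sum.inr i) 1 ≤ m := by
      rw [Finsupp.single_le_iff]; omega
    have heq : monomial m (1 : K) =
        monomial (m - Finsupp.single (Sum.inr i) 1) 1 * X (Sum.inr i) := by
      rw [MvPolynomial.X, monomial_mul, mul_one, tsub_add_cancel_of_le hle]
    rw [heq]
    exact Ideal.mul_mem_left _ _ (Ideal.subset_span (by simp))

lemma initialIdeal_mono {K : Type*} [Field K] {n : ℕ}
    {A B : Ideal (MvPolynomial (Fin n ⊕ Fin n) K)} (h : A ≤ B) :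
    initialIdeal K A ≤ initialIdeal K B := by
  refine Ideal.span_mono ?_
  rintro q ⟨p, hp, h0, he⟩
  exact ⟨p, h hp, h0, he⟩

lemma key_lemma {K : Type*} [Field K] {n : ℕ} (i : Fin n)
    (A : Ideal (MvPolynomial (Fin n ⊕ Fin n) K))
    (hA : ∀ p ∈ A, phi K i p ∈ A)
    {p : MvPolynomial (Fin n ⊕ Fin n) K}
    (hp : p ∈ A ⊔ Ideal.span {X (Sum.inl i), X (Sum.inr i)}) (hp0 : p ≠ 0) :
    (monomial (leadExp K p) (1 : K)) ∈
      initialIdeal K A ⊔ Ideal.span {X (Sum.inl i), X (Sum.inr i)} := by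
  by_cases h : (leadExp K p) (Sum.inl i) = 0 ∧ (leadExp K p) (Sum.inr i) = 0
  · obtain ⟨a, ha, b, hb, rfl⟩ := Submodule.mem_sup.mp hp
    have hφb : phi K i b = 0 := by
      obtain ⟨u, v, huv⟩ := Ideal.mem_span_pair.mp hb
      rw [← huv]
      simp [phi]
    have hφ : phi K i (a + b) ∈ A := by
      rw [map_add, hφb, add_zero]; exact hA a ha
    have hsub : (phi K i (a + b)).support ⊆ (a + b).support := by
      intro m hm
      rw [MvPolynomial.mem_support_iff] at hm ⊢
      rw [coeff_phi] at hm
      split_ifs at hm with h'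
      · exact hm
      · exact absurd rfl hm
    have hmem : leadExp K (a + b) ∈ (phi K i (a + b)).support := by
      rw [MvPolynomial.mem_support_iff, coeff_phi, if_pos h]
      exact MvPolynomial.mem_support_iff.mp (leadExp_spec hp0).1
    have heq := leadExp_eq_of hsub hmem
    refine Submodule.mem_sup_left ?_
    rw [← heq]
    refine Ideal.subset_span ⟨phi K i (a + b), hφ, ?_, rfl⟩
    intro e
    rw [e] at hmem
    simp at hmem
  · exact Submodule.mem_sup_right (monomial_mem_pair i _ h)

end AuxStmt1

/-- `in(J_{G∖i}, x_i, y_i) = (in(J_{G∖i}), x_i, y_i) = (in(J_G), x_i, y_i)`;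
in particular every minimal monomial generator of `in(J_G)` not divisible by `x_i` or
`y_i` lies in `in(J_{G∖i})`. -/
theorem stmt1 (K : Type*) [Field K] (n : ℕ) (G : SimpleGraph (Fin n)) (i : Fin n) :
    (initialIdeal K (beIdeal K (delVerts G {i}) +
        Ideal.span {X (Sum.inl i), X (Sum.inr i)}) =
      initialIdeal K (beIdeal K (delVerts G {i})) +
        Ideal.span {X (Sum.inl i), X (Sum.inr i)}) ∧
    (initialIdeal K (beIdeal K (delVerts G {i})) +
        Ideal.span {X (Sum.inl i), X (Sum.inr i)} =
      initialIdeal K (beIdeal K G) + Ideal.span {X (Sum.inl i), X (Sum.inr i)}) ∧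
    (∀ m : (Fin n ⊕ Fin n) →₀ ℕ,
      (monomial m (1 : K)) ∈ initialIdeal K (beIdeal K G) →
      (∀ m' : (Fin n ⊕ Fin n) →₀ ℕ, m' ≤ m → m' ≠ m →
        (monomial m' (1 : K)) ∉ initialIdeal K (beIdeal K G)) →
      m (Sum.inl i) = 0 → m (Sum.inr i) = 0 →
      (monomial m (1 : K)) ∈ initialIdeal K (beIdeal K (delVerts G {i}))) := by
  classical
  set T : Ideal (MvPolynomial (Fin n ⊕ Fin n) K) :=
    Ideal.span {X (Sum.inl i), X (Sum.inr i)} with hT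
  set J' : Ideal (MvPolynomial (Fin n ⊕ Fin n) K) := beIdeal K (delVerts G {i}) with hJ'
  set JG : Ideal (MvPolynomial (Fin n ⊕ Fin n) K) := beIdeal K G with hJG
  -- φ fixes the generators of J'
  have hgen : ∀ g ∈ { f | ∃ k l : Fin n, k < l ∧ (delVerts G {i}).Adj k l ∧
      f = fij K k l }, phi K i g = g := by
    rintro g ⟨k, l, hkl, hadj, rfl⟩
    have hk : k ≠ i := hadj.2.1
    have hl : l ≠ i := hadj.2.2
    simp [fij, phi, hk, hl]
  have hA : ∀ p ∈ J', phi K i p ∈ J' := by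
    intro p hp
    refine phi_mem_of i _ (fun g hg => ?_) hp
    rw [hgen g hg]
    exact Ideal.subset_span hg
  -- J' ≤ JG
  have hJ'JG : J' ≤ JG := by
    refine Ideal.span_mono ?_
    rintro g ⟨k, l, hkl, hadj, rfl⟩
    exact ⟨k, l, hkl, hadj.1, rfl⟩
  -- JG ≤ J' ⊔ T
  have hJGle : JG ≤ J' ⊔ T := by
    refine Ideal.span_le.mpr ?_
    rintro g ⟨k, l, hkl, hadj, rfl⟩
    by_cases hk : k = i
    · subst hk
      refine Submodule.mem_sup_right (Ideal.mem_span_pair.mpr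
        ⟨X (Sum.inr l), -X (Sum.inl l), ?_⟩)
      rw [fij]; ring
    · by_cases hl : l = i
      · subst hl
        refine Submodule.mem_sup_right (Ideal.mem_span_pair.mpr
          ⟨-X (Sum.inr k), X (Sum.inl k), ?_⟩)
        rw [fij]; ring
      · refine Submodule.mem_sup_left (Ideal.subset_span ?_)
        exact ⟨k, l, hkl, ⟨hadj, hk, hl⟩, rfl⟩
  -- T ≤ initialIdeal of any ideal containing the two variables
  have hTinit : ∀ I : Ideal (MvPolynomial (Fin n ⊕ Fin n) K), T ≤ I →
      T ≤ initialIdeal K I := by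
    intro I hI
    refine Ideal.span_le.mpr ?_
    intro q hq
    have hqI : q ∈ I := hI (Ideal.subset_span hq)
    have hqX : ∃ v, q = X v := by
      rcases hq with hq | hq
      · exact ⟨Sum.inl i, hq⟩
      · exact ⟨Sum.inr i, hq⟩
    obtain ⟨v, rfl⟩ := hqX
    have : (X v : MvPolynomial (Fin n ⊕ Fin n) K) =
        monomial (leadExp K (X v : MvPolynomial (Fin n ⊕ Fin n) K)) 1 := by
      rw [leadExp_X, MvPolynomial.X]
    rw [this]
    exact Ideal.subset_span ⟨X v, hqI, X_ne_zero v, by rw [← this, this]⟩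
  have part1 : initialIdeal K (J' + T) = initialIdeal K J' + T := by
    rw [Submodule.add_eq_sup, Submodule.add_eq_sup]
    refine le_antisymm ?_ ?_
    · refine Ideal.span_le.mpr ?_
      rintro q ⟨p, hp, h0, rfl⟩
      exact key_lemma i J' hA hp h0
    · refine sup_le ?_ ?_
      · exact (initialIdeal_mono le_sup_left :
          initialIdeal K J' ≤ initialIdeal K (J' ⊔ T)).trans le_rfl
      · exact hTinit _ le_sup_right
  have part2 : initialIdeal K J' + T = initialIdeal K JG + T := by
    rw [Submodule.add_eq_sup, Submodule.add_eq_sup]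
    refine le_antisymm ?_ ?_
    · exact sup_le ((initialIdeal_mono hJ'JG).trans le_sup_left) le_sup_right
    · refine sup_le ?_ le_sup_right
      refine Ideal.span_le.mpr ?_
      rintro q ⟨p, hp, h0, rfl⟩
      exact key_lemma i J' hA (hJGle hp) h0
  refine ⟨part1, part2, ?_⟩
  intro m hm _hmin h1 h2
  have hmm : monomial m (1 : K) ∈ initialIdeal K J' ⊔ T := by
    have : monomial m (1 : K) ∈ initialIdeal K JG + T :=
      Submodule.mem_sup_left hm
    rw [← part2, Submodule.add_eq_sup] at this
    exact this
  obtain ⟨a, ha, b, hb, hab⟩ := Submodule.mem_sup.mp hmm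
  have hφb : phi K i b = 0 := by
    obtain ⟨u, v, huv⟩ := Ideal.mem_span_pair.mp hb
    rw [← huv]
    simp [phi]
  have hφa : phi K i a ∈ initialIdeal K J' := by
    refine phi_mem_of i _ (fun g hg => ?_) ha
    obtain ⟨p, hp, h0, rfl⟩ := hg
    rw [phi_monomial]
    split_ifs
    · exact Ideal.subset_span ⟨p, hp, h0, rfl⟩
    · exact Ideal.zero_mem _
  have hfix : phi K i (monomial m (1 : K)) = monomial m (1 : K) := by
    rw [phi_monomial, if_pos ⟨h1, h2⟩]
  have heq : monomial m (1 : K) = phi K i a := by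
    rw [← hfix, ← hab, map_add, hφb, add_zero]
  rw [heq]
  exact hφa
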